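/- (Lemme 2, norm criterion for units of ℚ_p in the ramified case d = p) Let p be an odd prime and let u ∈ ℤ_p be a unit of the ring ℤ_p of p-adic integers. Then there exist x, y ∈ ℚ_p with x² − p·y² = u if and only if the residue of u in the residue field ZMod p (via the reduction map ℤ_p → ZMod p) is a square in ZMod p. -/

import Mathlib

open Polynomial

lemma padic_aux_unit_iff_toZMod_ne_zero (p : ℕ) [Fact p.Prime] (z : ℤ_[p]) :
    IsUnit z ↔ PadicInt.toZMod z ≠ 0 := by
  rw [PadicInt.isUnit_iff]
  constructor
  · intro h h0
    have : z ∈ RingHom.ker (PadicInt.toZMod : ℤ_[p] →+* ZMod p) := h0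
    rw [PadicInt.ker_toZMod, IsLocalRing.mem_maximalIdeal, mem_nonunits_iff,
      PadicInt.isUnit_iff] at this
    exact this h
  · intro h
    by_contra hne
    have hlt : ‖z‖ < 1 := lt_of_le_of_ne z.norm_le_one hne
    have : z ∈ RingHom.ker (PadicInt.toZMod : ℤ_[p] →+* ZMod p) := by
      rw [PadicInt.ker_toZMod, IsLocalRing.mem_maximalIdeal, mem_nonunits_iff,
        PadicInt.isUnit_iff]
      exact ne_of_lt hlt
    exact h this

/-- (Lemme 2, norm criterion for units of `ℚ_p`, `d = p`) A unit `u` of `ℤ_p` (p odd)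
is of the form `x² − p·y²` with `x, y ∈ ℚ_p` if and only if its residue in `ZMod p`
is a square. -/
theorem unit_is_norm_iff_residue_square (p : ℕ) [Fact p.Prime] (hp : p ≠ 2)
    (u : ℤ_[p]) (hu : IsUnit u) :
    (∃ x y : ℚ_[p], x ^ 2 - p * y ^ 2 = u) ↔ IsSquare (PadicInt.toZMod u) := by
  have hp1 : (1 : ℝ) < (p : ℝ) := by exact_mod_cast (Fact.out : p.Prime).one_lt
  have hpR : (p : ℝ) ≠ 1 := ne_of_gt hp1
  have hp0 : (0 : ℝ) < (p : ℝ) := lt_trans one_pos hp1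
  have hunorm : ‖u‖ = 1 := PadicInt.isUnit_iff.mp hu
  have hucoe : ‖(u : ℚ_[p])‖ = 1 := by rw [← PadicInt.norm_def]; exact hunorm
  constructor
  · rintro ⟨x, y, hxy⟩
    -- show ‖x‖ = 1 and ‖y‖ ≤ 1
    have key : ‖x‖ = 1 ∧ ‖y‖ ≤ 1 := by
      by_cases hy : y = 0
      · subst hy
        have hxy' : x ^ 2 = (u : ℚ_[p]) := by
          rw [← hxy]; ring
        have : ‖x‖ ^ 2 = 1 := by
          rw [← norm_pow, hxy', hucoe]
        constructor
        · nlinarith [norm_nonneg x, sq_nonneg (‖x‖ - 1)]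
        · simp
      · -- y ≠ 0
        have hyB : ((p : ℚ_[p]) * y ^ 2) ≠ 0 := by
          have hpq : (p : ℚ_[p]) ≠ 0 := Nat.cast_ne_zero.mpr (Fact.out : p.Prime).ne_zero
          exact mul_ne_zero hpq (pow_ne_zero _ hy)
        have hBnorm : ‖(p : ℚ_[p]) * y ^ 2‖ = (p : ℝ) ^ (-(1 + 2 * y.valuation)) := by
          rw [norm_mul, norm_pow, Padic.norm_p, Padic.norm_eq_zpow_neg_valuation hy]
          rw [← zpow_natCast, ← zpow_mul, ← zpow_neg_one, ← zpow_add₀ (ne_of_gt hp0)]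
          ring_nf
        have hBne1 : ‖(p : ℚ_[p]) * y ^ 2‖ ≠ 1 := by
          rw [hBnorm]
          intro h
          have := zpow_right_injective₀ hp0 hpR (h.trans (zpow_zero (p:ℝ)).symm)
          omega
        by_cases hx : x = 0
        · exfalso
          apply hBne1
          rw [← norm_neg, ← hucoe]
          rw [← hxy, hx]
          ring_nf
        · have hAnorm : ‖x ^ 2‖ = (p : ℝ) ^ (-(2 * x.valuation)) := by
            rw [norm_pow, Padic.norm_eq_zpow_neg_valuation hx, ← zpow_natCast, ← zpow_mul]
            ring_nf
          have hne : ‖x ^ 2‖ ≠ ‖-((p : ℚ_[p]) * y ^ 2)‖ := by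
            rw [norm_neg, hAnorm, hBnorm]
            intro h
            have := zpow_right_injective₀ hp0 hpR h
            omega
          have hmax : max ‖x ^ 2‖ ‖(p : ℚ_[p]) * y ^ 2‖ = 1 := by
            rw [← norm_neg ((p : ℚ_[p]) * y ^ 2), ← Padic.add_eq_max_of_ne hne]
            rw [← sub_eq_add_neg, hxy, hucoe]
          have hA1 : ‖x ^ 2‖ = 1 := by
            rcases max_cases ‖x ^ 2‖ ‖(p : ℚ_[p]) * y ^ 2‖ with ⟨h1, _⟩ | ⟨h1, _⟩
            · rw [← hmax, h1]
            · exact absurd (h1.symm.trans hmax) hBne1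
          have hBle : ‖(p : ℚ_[p]) * y ^ 2‖ ≤ 1 := hmax ▸ le_max_right _ _
          constructor
          · rw [norm_pow] at hA1
            nlinarith [norm_nonneg x, sq_nonneg (‖x‖ - 1)]
          · -- from hBle : p^(-(1+2w)) ≤ 1 = p^0
            rw [hBnorm] at hBle
            have hle : -(1 + 2 * y.valuation) ≤ 0 := by
              by_contra hlt
              push_neg at hlt
              have := zpow_lt_zpow_right₀ hp1 (show (0:ℤ) < -(1 + 2 * y.valuation) from hlt)
              rw [zpow_zero] at this
              linarith
            have hw : 0 ≤ y.valuation := by omega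
            rw [Padic.norm_eq_zpow_neg_valuation hy]
            calc (p:ℝ) ^ (-y.valuation) ≤ (p:ℝ) ^ (0:ℤ) :=
                  zpow_le_zpow_right₀ (le_of_lt hp1) (by omega)
              _ = 1 := zpow_zero _
        
    obtain ⟨hx1, hy1⟩ := key
    set x' : ℤ_[p] := ⟨x, le_of_eq hx1⟩ with hx'
    set y' : ℤ_[p] := ⟨y, hy1⟩ with hy'
    have heq : x' ^ 2 - (p : ℤ_[p]) * y' ^ 2 = u := by
      apply Subtype.ext
      push_cast
      exact hxy
    have := congrArg PadicInt.toZMod heq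
    rw [map_sub, map_mul, map_pow, map_pow, map_natCast, ZMod.natCast_self, zero_mul,
      sub_zero] at this
    exact ⟨PadicInt.toZMod x', by rw [← this]; ring⟩
  · rintro ⟨b, hb⟩
    have hbne : b ≠ 0 := by
      intro h0
      have : IsUnit (PadicInt.toZMod u) := hu.map _
      rw [hb, h0, mul_zero] at this
      exact this.ne_zero rfl
    set a : ℤ_[p] := (b.val : ℤ_[p]) with ha
    have hta : PadicInt.toZMod a = b := by
      rw [ha, map_natCast, ZMod.natCast_val, ZMod.cast_id]
    set F : Polynomial ℤ_[p] := X ^ 2 - C u with hF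
    have hFa : F.eval a = a ^ 2 - u := by simp [hF]
    have hFd : F.derivative.eval a = 2 * a := by
      simp [hF, derivative_pow]
    have hderiv : ‖F.derivative.eval a‖ = 1 := by
      rw [hFd, ← PadicInt.isUnit_iff, padic_aux_unit_iff_toZMod_ne_zero]
      rw [map_mul, hta, show ((2:ℤ_[p])) = ((2:ℕ):ℤ_[p]) by norm_num, map_natCast]
      apply mul_ne_zero _ hbne
      rw [Ne, ZMod.natCast_eq_zero_iff]
      intro hdvd
      rcases (Nat.prime_two.eq_one_or_self_of_dvd p hdvd) with h1 | h2
      · exact (Fact.out : p.Prime).one_lt.ne' h1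
      · exact hp h2
    have heval : ‖F.eval a‖ < 1 := by
      rw [hFa, PadicInt.norm_lt_one_iff_dvd]
      have hker : a ^ 2 - u ∈ RingHom.ker (PadicInt.toZMod : ℤ_[p] →+* ZMod p) := by
        show PadicInt.toZMod _ = 0
        rw [map_sub, map_pow, hta, hb]; ring
      rw [PadicInt.ker_toZMod, PadicInt.maximalIdeal_eq_span_p,
        Ideal.mem_span_singleton] at hker
      exact hker
    obtain ⟨z, hz, -, -, -⟩ := hensels_lemma (F := F) (a := a)
      (by simp only [coe_aeval_eq_eval]; rw [hderiv]; simpa using heval)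
    refine ⟨(z : ℚ_[p]), 0, ?_⟩
    have : z ^ 2 = u := by
      have h2 : F.eval z = z ^ 2 - u := by simp [hF]
      rw [coe_aeval_eq_eval, h2] at hz
      exact sub_eq_zero.mp hz
    calc (z : ℚ_[p]) ^ 2 - p * 0 ^ 2 = ((z ^ 2 : ℤ_[p]) : ℚ_[p]) := by push_cast; ring
      _ = u := by rw [this]
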